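/- Let n ≥ 2. No set of 2n + 2 distinct points in ℝ^n is shattered by the class of strict equality separators: for any 2n + 2 distinct points x_1, …, x_{2n+2} ∈ ℝ^n there exists a labeling f : {x_1, …, x_{2n+2}} → {0,1} such that no function of the form x ↦ 1[w·x + b = 0] or x ↦ 1[w·x + b ≠ 0] (w ∈ ℝ^n, b ∈ ℝ) agrees with f on all 2n + 2 points. Consequently the VC dimension of the strict equality separator class is at most 2n + 1. -/

import Mathlib

open Module

/-- Dot product of two vectors in ℝⁿ. -/
noncomputable def dotp {n : ℕ} (w x : Fin n → ℝ) : ℝ := ∑ i, w i * x i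

/-- The class of strict equality separators on ℝⁿ: functions of the form
`x ↦ 1[w·x + b = 0]` together with those of the form `x ↦ 1[w·x + b ≠ 0]`. -/
def strictEqSep (n : ℕ) : Set ((Fin n → ℝ) → Prop) :=
  {h | ∃ w : Fin n → ℝ, ∃ b : ℝ,
      h = (fun x => dotp w x + b = 0) ∨ h = (fun x => dotp w x + b ≠ 0)}

/-- A hypothesis class `H` shatters a finite set `S` if every labeling of `S`
is realized by some hypothesis in `H`. -/
def Shatters {n : ℕ} (H : Set ((Fin n → ℝ) → Prop)) (S : Finset (Fin n → ℝ)) : Prop :=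
  ∀ f : (Fin n → ℝ) → Prop, ∃ h ∈ H, ∀ x ∈ S, (h x ↔ f x)

namespace VCAux

variable {n : ℕ}

lemma dotp_affine (w : Fin n → ℝ) (c : ℝ) (p1 p2 p3 : Fin n → ℝ) :
    dotp w (c • (p1 -ᵥ p2) +ᵥ p3) = c * dotp w p1 - c * dotp w p2 + dotp w p3 := by
  simp only [dotp, vsub_eq_sub, vadd_eq_add, Pi.add_apply, Pi.smul_apply, Pi.sub_apply,
    smul_eq_mul]
  calc ∑ i, w i * (c * (p1 i - p2 i) + p3 i)
      = ∑ i, (c * (w i * p1 i) - c * (w i * p2 i) + w i * p3 i) :=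
        Finset.sum_congr rfl (fun i _ => by ring)
    _ = c * ∑ i, w i * p1 i - c * ∑ i, w i * p2 i + ∑ i, w i * p3 i := by
        rw [Finset.sum_add_distrib, Finset.sum_sub_distrib, ← Finset.mul_sum, ← Finset.mul_sum]

/-- The zero set of an affine functional, as an affine subspace. -/
noncomputable def zeroSet (w : Fin n → ℝ) (b : ℝ) : AffineSubspace ℝ (Fin n → ℝ) where
  carrier := {x | dotp w x + b = 0}
  smul_vsub_vadd_mem' := by
    intro c p1 p2 p3 h1 h2 h3
    simp only [Set.mem_setOf_eq] at *
    rw [dotp_affine]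
    have e1 : dotp w p1 = -b := by linarith
    have e2 : dotp w p2 = -b := by linarith
    have e3 : dotp w p3 = -b := by linarith
    rw [e1, e2, e3]; ring

lemma mem_zeroSet {w : Fin n → ℝ} {b : ℝ} {x : Fin n → ℝ} :
    x ∈ zeroSet w b ↔ dotp w x + b = 0 := Iff.rfl

lemma range_coe_finset (X : Finset (Fin n → ℝ)) :
    Set.range ((↑) : X → (Fin n → ℝ)) = (X : Set (Fin n → ℝ)) := by
  rw [Subtype.range_coe_subtype]; exact Finset.setOf_mem

/-- An affinely independent subset of `S` has at most `finrank (vectorSpan S) + 1` points. -/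
lemma card_le_of_indep (S X : Finset (Fin n → ℝ)) (hX : X ⊆ S)
    (h : AffineIndependent ℝ ((↑) : X → (Fin n → ℝ))) :
    X.card ≤ finrank ℝ (vectorSpan ℝ (S : Set (Fin n → ℝ))) + 1 := by
  rcases X.eq_empty_or_nonempty with rfl | hne
  · simp
  · have hpos : 1 ≤ X.card := Finset.card_pos.mpr hne
    have hcard : Fintype.card X = (X.card - 1) + 1 := by
      rw [Fintype.card_coe]; omega
    have h1 := h.finrank_vectorSpan hcard
    rw [range_coe_finset] at h1
    have h3 := Submodule.finrank_mono
      (vectorSpan_mono ℝ (Finset.coe_subset.mpr hX) :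
        vectorSpan ℝ (X : Set (Fin n → ℝ)) ≤ vectorSpan ℝ (S : Set (Fin n → ℝ)))
    omega

/-- An affinely independent subset of `S` of maximal size spans `affineSpan S`. -/
lemma span_eq_of_indep (S X : Finset (Fin n → ℝ)) (hX : X ⊆ S)
    (h : AffineIndependent ℝ ((↑) : X → (Fin n → ℝ)))
    (hc : X.card = finrank ℝ (vectorSpan ℝ (S : Set (Fin n → ℝ))) + 1) :
    affineSpan ℝ (X : Set (Fin n → ℝ)) = affineSpan ℝ (S : Set (Fin n → ℝ)) := by
  have hne : X.Nonempty := Finset.card_pos.mp (by omega)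
  have hcard : Fintype.card X = finrank ℝ (vectorSpan ℝ (S : Set (Fin n → ℝ))) + 1 := by
    rw [Fintype.card_coe]; exact hc
  have h1 := h.finrank_vectorSpan hcard
  rw [range_coe_finset] at h1
  have hdirle : (affineSpan ℝ (X : Set (Fin n → ℝ))).direction ≤
      (affineSpan ℝ (S : Set (Fin n → ℝ))).direction := by
    rw [direction_affineSpan, direction_affineSpan]
    exact vectorSpan_mono ℝ (Finset.coe_subset.mpr hX)
  have hdir : (affineSpan ℝ (X : Set (Fin n → ℝ))).direction =
      (affineSpan ℝ (S : Set (Fin n → ℝ))).direction := by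
    refine Submodule.eq_of_le_of_finrank_le hdirle ?_
    rw [direction_affineSpan, direction_affineSpan, h1]
  apply AffineSubspace.ext_of_direction_eq hdir
  obtain ⟨x, hx⟩ := hne
  exact ⟨x, mem_affineSpan ℝ (Finset.mem_coe.mpr hx),
    mem_affineSpan ℝ (Finset.mem_coe.mpr (hX hx))⟩

/-- A finite affinely dependent set has a point in the affine span of the others. -/
lemma exists_mem_span_erase (X : Finset (Fin n → ℝ))
    (h : ¬ AffineIndependent ℝ ((↑) : X → (Fin n → ℝ))) :
    ∃ x ∈ X, x ∈ affineSpan ℝ ((X.erase x : Finset (Fin n → ℝ)) : Set (Fin n → ℝ)) := by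
  classical
  obtain ⟨f, hvec, hsum, x, hxX, hfx⟩ := exists_nontrivial_relation_sum_zero_of_not_affine_ind h
  refine ⟨x, hxX, ?_⟩
  set Y := X.erase x with hY
  have hsY : ∑ e ∈ Y, f e = -f x := by
    rw [hY, Finset.sum_erase_eq_sub hxX, hsum]; ring
  have hvY : ∑ e ∈ Y, f e • e = -(f x • x) := by
    rw [hY, Finset.sum_erase_eq_sub (f := fun e => f e • e) hxX, hvec, zero_sub]
  set g : (Fin n → ℝ) → ℝ := fun e => (-f x)⁻¹ * f e with hg
  have hfxne : -f x ≠ 0 := neg_ne_zero.mpr hfx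
  have hg1 : ∑ e ∈ Y, g e = 1 := by
    rw [hg]; simp only []
    rw [← Finset.mul_sum, hsY, inv_mul_cancel₀ hfxne]
  have hgx : ∑ e ∈ Y, g e • e = x := by
    have : ∑ e ∈ Y, g e • e = (-f x)⁻¹ • ∑ e ∈ Y, f e • e := by
      rw [Finset.smul_sum]
      exact Finset.sum_congr rfl (fun e _ => by rw [hg]; simp [smul_smul])
    rw [this, hvY, ← neg_smul, smul_smul]
    rw [show (-f x)⁻¹ * -(f x) = 1 by field_simp, one_smul]
  have hsum1 : ∑ i ∈ (Finset.univ : Finset Y), g (i : Fin n → ℝ) = 1 := by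
    rw [Finset.sum_coe_sort Y g]; exact hg1
  have hmem := affineCombination_mem_affineSpan (k := ℝ) hsum1 ((↑) : Y → (Fin n → ℝ))
  rw [range_coe_finset] at hmem
  have hcomb := Finset.univ.affineCombination_eq_linear_combination
    ((↑) : Y → (Fin n → ℝ)) (fun i => g (i : Fin n → ℝ)) hsum1
  rw [hcomb] at hmem
  have : ∑ i ∈ (Finset.univ : Finset Y), g (i : Fin n → ℝ) • (i : Fin n → ℝ) = x := by
    rw [Finset.sum_coe_sort Y (fun e => g e • e)]; exact hgx
  rwa [this] at hmem

/-- The key combinatorial lemma: a finite set with at least `2 * finrank(vectorSpan) + 2`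
points can be partitioned into two parts, each meeting the affine span of the other. -/
lemma exists_partition (S : Finset (Fin n → ℝ))
    (hS : 2 * finrank ℝ (vectorSpan ℝ (S : Set (Fin n → ℝ))) + 2 ≤ S.card) :
    ∃ P Q : Finset (Fin n → ℝ), P ∪ Q = S ∧ Disjoint P Q ∧
      (∃ c ∈ P, c ∈ affineSpan ℝ (Q : Set (Fin n → ℝ))) ∧
      (∃ c ∈ Q, c ∈ affineSpan ℝ (P : Set (Fin n → ℝ))) := by
  classical
  set k := finrank ℝ (vectorSpan ℝ (S : Set (Fin n → ℝ))) with hk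
  -- k ≥ 1
  have hkpos : 1 ≤ k := by
    have h2 : 1 < S.card := by omega
    obtain ⟨a, ha, b, hb, hab⟩ := Finset.one_lt_card.mp h2
    have hmem : a -ᵥ b ∈ vectorSpan ℝ (S : Set (Fin n → ℝ)) :=
      vsub_mem_vectorSpan ℝ (Finset.mem_coe.mpr ha) (Finset.mem_coe.mpr hb)
    have hne : vectorSpan ℝ (S : Set (Fin n → ℝ)) ≠ ⊥ := by
      intro hbot
      rw [hbot, Submodule.mem_bot] at hmem
      exact hab (by rwa [vsub_eq_sub, sub_eq_zero] at hmem)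
    exact Submodule.one_le_finrank_iff.mpr hne
  by_cases hE : ∃ Q0 : Finset (Fin n → ℝ), Q0 ⊆ S ∧ Q0.Nonempty ∧
      Q0.card + k + 2 ≤ S.card ∧
      ∃ c ∈ S, c ∉ Q0 ∧ c ∈ affineSpan ℝ (Q0 : Set (Fin n → ℝ))
  · obtain ⟨Q0, hQ0S, hQ0ne, hQ0card, c, hcS, hcQ0, hcsp⟩ := hE
    set P := S \ Q0 with hP
    have hcP : c ∈ P := Finset.mem_sdiff.mpr ⟨hcS, hcQ0⟩
    have hPcard : P.card + Q0.card = S.card := by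
      rw [hP, Finset.card_sdiff_of_subset hQ0S]
      have := Finset.card_le_card hQ0S
      omega
    by_cases hPg : ∃ c' ∈ Q0, c' ∈ affineSpan ℝ (P : Set (Fin n → ℝ))
    · exact ⟨P, Q0, Finset.sdiff_union_of_subset hQ0S, Finset.sdiff_disjoint,
        ⟨c, hcP, hcsp⟩, hPg⟩
    · have hdep : ¬ AffineIndependent ℝ ((↑) : (P.erase c) → (Fin n → ℝ)) := by
        intro hind
        have hsub : P.erase c ⊆ S := (Finset.erase_subset c P).trans Finset.sdiff_subset
        have h1 : (P.erase c).card ≤ k + 1 := card_le_of_indep S _ hsub hind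
        have h2 : (P.erase c).card = P.card - 1 := Finset.card_erase_of_mem hcP
        have heq : (P.erase c).card = k + 1 := by omega
        have hspan := span_eq_of_indep S _ hsub hind heq
        apply hPg
        obtain ⟨q0, hq0⟩ := hQ0ne
        refine ⟨q0, hq0, ?_⟩
        have hq0span : q0 ∈ affineSpan ℝ (S : Set (Fin n → ℝ)) :=
          mem_affineSpan ℝ (Finset.mem_coe.mpr (hQ0S hq0))
        rw [← hspan] at hq0span
        exact affineSpan_mono ℝ (Finset.coe_subset.mpr (Finset.erase_subset c P)) hq0span
      obtain ⟨x, hxPe, hxsp⟩ := exists_mem_span_erase _ hdep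
      have hxP : x ∈ P := Finset.mem_of_mem_erase hxPe
      have hxc : x ≠ c := Finset.ne_of_mem_erase hxPe
      have hxS : x ∈ S := Finset.sdiff_subset hxP
      have hxQ0 : x ∉ Q0 := (Finset.mem_sdiff.mp hxP).2
      refine ⟨P.erase x, insert x Q0, ?_, ?_, ⟨c, ?_, ?_⟩,
        ⟨x, Finset.mem_insert_self _ _, ?_⟩⟩
      · ext a
        simp only [Finset.mem_union, Finset.mem_erase, Finset.mem_insert, hP,
          Finset.mem_sdiff]
        constructor
        · rintro (⟨_, haS, _⟩ | rfl | haQ0)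
          · exact haS
          · exact hxS
          · exact hQ0S haQ0
        · intro haS
          by_cases haQ0 : a ∈ Q0
          · exact Or.inr (Or.inr haQ0)
          · by_cases hax : a = x
            · exact Or.inr (Or.inl hax)
            · exact Or.inl ⟨hax, haS, haQ0⟩
      · rw [Finset.disjoint_left]
        intro a ha hains
        obtain ⟨hax, haP⟩ := Finset.mem_erase.mp ha
        rcases Finset.mem_insert.mp hains with rfl | haQ0
        · exact hax rfl
        · exact (Finset.mem_sdiff.mp haP).2 haQ0
      · exact Finset.mem_erase.mpr ⟨Ne.symm hxc, hcP⟩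
      · exact affineSpan_mono ℝ (Finset.coe_subset.mpr (Finset.subset_insert x Q0)) hcsp
      · refine affineSpan_mono ℝ (Finset.coe_subset.mpr ?_) hxsp
        exact Finset.erase_subset_erase x (Finset.erase_subset c P)
  · -- Every subset of size k+1 is affinely independent.
    have hindep : ∀ X : Finset (Fin n → ℝ), X ⊆ S → X.card = k + 1 →
        AffineIndependent ℝ ((↑) : X → (Fin n → ℝ)) := by
      intro X hXS hXcard
      by_contra hdepX
      obtain ⟨x, hxX, hxsp⟩ := exists_mem_span_erase X hdepX
      refine hE ⟨X.erase x, (Finset.erase_subset x X).trans hXS, ?_, ?_,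
        x, hXS hxX, Finset.notMem_erase x X, hxsp⟩
      · apply Finset.card_pos.mp
        rw [Finset.card_erase_of_mem hxX]; omega
      · rw [Finset.card_erase_of_mem hxX]; omega
    obtain ⟨Q, hQS, hQcard⟩ := Finset.exists_subset_card_eq (show k + 1 ≤ S.card by omega)
    set P := S \ Q with hP
    have hPcard : P.card = S.card - (k + 1) := by
      rw [hP, Finset.card_sdiff_of_subset hQS, hQcard]
    obtain ⟨Q', hQ'P, hQ'card⟩ := Finset.exists_subset_card_eq (show k + 1 ≤ P.card by omega)
    have hQ'S : Q' ⊆ S := hQ'P.trans Finset.sdiff_subset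
    have e1 := span_eq_of_indep S Q hQS (hindep Q hQS hQcard) hQcard
    have e2 := span_eq_of_indep S Q' hQ'S (hindep Q' hQ'S hQ'card) hQ'card
    have hQne : Q.Nonempty := Finset.card_pos.mp (by omega)
    have hPne : P.Nonempty := Finset.card_pos.mp (by omega)
    obtain ⟨p, hp⟩ := hPne
    obtain ⟨q, hq⟩ := hQne
    refine ⟨P, Q, Finset.sdiff_union_of_subset hQS, Finset.sdiff_disjoint, ⟨p, hp, ?_⟩,
      ⟨q, hq, ?_⟩⟩
    · rw [e1]
      exact mem_affineSpan ℝ (Finset.mem_coe.mpr (Finset.sdiff_subset hp))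
    · have hq' : q ∈ affineSpan ℝ (Q' : Set (Fin n → ℝ)) := by
        rw [e2]
        exact mem_affineSpan ℝ (Finset.mem_coe.mpr (hQS hq))
      exact affineSpan_mono ℝ (Finset.coe_subset.mpr hQ'P) hq'

/-- An unrealizable labeling exists for any set of at least `2n+2` points. -/
lemma exists_unrealizable (S : Finset (Fin n → ℝ)) (hcard : 2 * n + 2 ≤ S.card) :
    ∃ f : (Fin n → ℝ) → Prop, ∀ h ∈ strictEqSep n, ∃ x ∈ S, ¬ (h x ↔ f x) := by
  have hkn : finrank ℝ (vectorSpan ℝ (S : Set (Fin n → ℝ))) ≤ n := by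
    have h1 := Submodule.finrank_le (vectorSpan ℝ (S : Set (Fin n → ℝ)))
    rwa [Module.finrank_fin_fun] at h1
  obtain ⟨P, Q, hunion, hdisj, ⟨cP, hcPP, hcPsp⟩, ⟨cQ, hcQQ, hcQsp⟩⟩ :=
    exists_partition S (by omega)
  have hPS : P ⊆ S := hunion ▸ Finset.subset_union_left
  have hQS : Q ⊆ S := hunion ▸ Finset.subset_union_right
  refine ⟨fun x => x ∈ Q, ?_⟩
  rintro h ⟨w, b, hh | hh⟩ <;> subst hh <;> by_contra hcon <;> push_neg at hcon
  · -- equality form: Q ⊆ zero set, but cP ∈ P lies in span Q ⊆ zero set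
    have hQZ : (Q : Set (Fin n → ℝ)) ⊆ (zeroSet w b : Set (Fin n → ℝ)) := by
      intro q hq
      have hq' : q ∈ Q := Finset.mem_coe.mp hq
      exact mem_zeroSet.mpr ((hcon q (hQS hq')).mpr hq')
    have hsp : affineSpan ℝ (Q : Set (Fin n → ℝ)) ≤ zeroSet w b := affineSpan_le.mpr hQZ
    have hcPz : dotp w cP + b = 0 := mem_zeroSet.mp (hsp hcPsp)
    have hcPQ : cP ∈ Q := (hcon cP (hPS hcPP)).mp hcPz
    exact Finset.disjoint_left.mp hdisj hcPP hcPQ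
  · -- inequality form: P ⊆ zero set, but cQ ∈ Q lies in span P ⊆ zero set
    have hPZ : (P : Set (Fin n → ℝ)) ⊆ (zeroSet w b : Set (Fin n → ℝ)) := by
      intro p hp
      have hp' : p ∈ P := Finset.mem_coe.mp hp
      have hpQ : p ∉ Q := Finset.disjoint_left.mp hdisj hp'
      have : ¬ (dotp w p + b ≠ 0) := fun hne => hpQ ((hcon p (hPS hp')).mp hne)
      exact mem_zeroSet.mpr (not_not.mp this)
    have hsp : affineSpan ℝ (P : Set (Fin n → ℝ)) ≤ zeroSet w b := affineSpan_le.mpr hPZ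
    have hcQz : dotp w cQ + b = 0 := mem_zeroSet.mp (hsp hcQsp)
    exact ((hcon cQ (hQS hcQQ)).mpr hcQQ) hcQz

end VCAux

/-- For `n ≥ 2`, no set of `2n + 2` distinct points in ℝⁿ is shattered by the strict
equality separator class: there is a labeling that no strict equality separator
realizes.  Consequently every shattered set has at most `2n + 1` points. -/
theorem vc_dim_strict_equality_separators_upper (n : ℕ) (hn : 2 ≤ n) :
    (∀ S : Finset (Fin n → ℝ), S.card = 2 * n + 2 →
      ∃ f : (Fin n → ℝ) → Prop, ∀ h ∈ strictEqSep n, ∃ x ∈ S, ¬ (h x ↔ f x)) ∧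
    (∀ S : Finset (Fin n → ℝ), Shatters (strictEqSep n) S → S.card ≤ 2 * n + 1) := by
  constructor
  · intro S hcard
    exact VCAux.exists_unrealizable S (by omega)
  · intro S hsh
    by_contra hlt
    push_neg at hlt
    obtain ⟨S', hsub, hcard'⟩ := Finset.exists_subset_card_eq (show 2 * n + 2 ≤ S.card by omega)
    obtain ⟨f, hf⟩ := VCAux.exists_unrealizable S' (by omega)
    obtain ⟨h, hmem, hagree⟩ := hsh f
    obtain ⟨x, hxS', hne⟩ := hf h hmem
    exact hne (hagree x (hsub hxS'))
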